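/- Let D be an m×p real matrix with unit-norm columns, partitioned into groups of columns of size g. Then the sparse block coherence μ_B^{s} satisfies 0 ≤ μ_B^{s} ≤ √(s/g)·μ, where μ is the standard coherence of D. -/

import Mathlib

noncomputable def l2 {α : Type*} [Fintype α] (x : α → ℝ) : ℝ := Real.sqrt (∑ i, x i ^ 2)
noncomputable def l0 {α : Type*} (x : α → ℝ) : ℕ := Nat.card {i // x i ≠ 0}

/-- Largest `s`-sparse eigenvalue of `ZᵀZ`. -/
noncomputable def lamMaxS {α β : Type*} [Fintype α] [Fintype β]
    (s : ℕ) (Z : Matrix α β ℝ) : ℝ :=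
  sSup {x | ∃ v : β → ℝ, l2 v = 1 ∧ l0 v ≤ s ∧
    x = dotProduct v ((Z.transpose * Z).mulVec v)}

/-- The sparse matrix norm `ρ^s(Z) = √(λ_max^s(ZᵀZ))`. -/
noncomputable def rhoS {α β : Type*} [Fintype α] [Fintype β]
    (s : ℕ) (Z : Matrix α β ℝ) : ℝ :=
  Real.sqrt (lamMaxS s Z)

noncomputable def gram {m q g : ℕ} (D : Matrix (Fin m) (Fin q × Fin g) ℝ)
    (G F : Fin q) : Matrix (Fin g) (Fin g) ℝ :=
  fun a b => ∑ i, D i (G, a) * D i (F, b)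

/-- Standard coherence of `D`. -/
noncomputable def coh {m q g : ℕ} (D : Matrix (Fin m) (Fin q × Fin g) ℝ) : ℝ :=
  sSup {x | ∃ i j : Fin q × Fin g, i ≠ j ∧ x = |∑ r, D r i * D r j|}

/-- The sparse block coherence `μ_B^{s}`. -/
noncomputable def muBs {m q g : ℕ} (s : ℕ) (D : Matrix (Fin m) (Fin q × Fin g) ℝ) : ℝ :=
  sSup {x | ∃ G F : Fin q, G ≠ F ∧ x = (1 / (g : ℝ)) * rhoS s (gram D G F)}

lemma quad_eq {α β : Type*} [Fintype α] [Fintype β] (Z : Matrix α β ℝ) (v : β → ℝ) :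
    dotProduct v ((Z.transpose * Z).mulVec v) = ∑ a, (Z.mulVec v a)^2 := by
  rw [Matrix.dotProduct_mulVec, ← Matrix.vecMul_vecMul, Matrix.vecMul_transpose,
    ← Matrix.dotProduct_mulVec]
  simp [dotProduct, sq]

/-- Proposition 1, second bound: `0 ≤ μ_B^{s} ≤ √(s/g)·μ`. -/
theorem muBs_le {m q g s : ℕ} (D : Matrix (Fin m) (Fin q × Fin g) ℝ)
    (hunit : ∀ j, ∑ i, D i j ^ 2 = 1) (hs1 : 1 ≤ s) (hsg : s ≤ g) :
    0 ≤ muBs s D ∧ muBs s D ≤ Real.sqrt ((s : ℝ) / g) * coh D := by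
  classical
  have hg : 0 < g := lt_of_lt_of_le hs1 hsg
  have hgR : (0 : ℝ) < g := by exact_mod_cast hg
  set Sc : Set ℝ := {x | ∃ i j : Fin q × Fin g, i ≠ j ∧ x = |∑ r, D r i * D r j|} with hSc
  -- coherence set bounded above by 1
  have hSc_bdd : ∀ x ∈ Sc, x ≤ 1 := by
    rintro x ⟨i, j, hij, rfl⟩
    have h := Finset.sum_mul_sq_le_sq_mul_sq Finset.univ (fun r => D r i) (fun r => D r j)
    rw [hunit i, hunit j, one_mul] at h
    rw [abs_le]
    constructor <;> nlinarith [h]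
  have hcoh_nonneg : 0 ≤ coh D := by
    rcases Set.eq_empty_or_nonempty Sc with h | ⟨x, hx⟩
    · rw [coh, ← hSc, h, Real.sSup_empty]
    · obtain ⟨i, j, hij, rfl⟩ := hx
      exact le_trans (abs_nonneg _) (le_csSup ⟨1, hSc_bdd⟩ ⟨i, j, hij, rfl⟩)
  -- entry bound
  have hentry : ∀ i j : Fin q × Fin g, i ≠ j → |∑ r, D r i * D r j| ≤ coh D := by
    intro i j hij
    exact le_csSup ⟨1, hSc_bdd⟩ ⟨i, j, hij, rfl⟩
  set μ := coh D with hμ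
  -- key bound for each pair of distinct groups
  have key : ∀ G F : Fin q, G ≠ F →
      (1 / (g : ℝ)) * rhoS s (gram D G F) ≤ Real.sqrt ((s : ℝ) / g) * μ := by
    intro G F hGF
    set Z := gram D G F with hZ
    have hZb : ∀ a b, |Z a b| ≤ μ := by
      intro a b
      exact hentry (G, a) (F, b) (by simp [Prod.ext_iff, hGF])
    -- lamMaxS bound
    have hlam : lamMaxS s Z ≤ (g : ℝ) * ((s : ℝ) * μ ^ 2) := by
      have hb_nonneg : (0:ℝ) ≤ (g : ℝ) * ((s : ℝ) * μ ^ 2) := by positivity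
      rcases Set.eq_empty_or_nonempty
          {x | ∃ v : (Fin g) → ℝ, l2 v = 1 ∧ l0 v ≤ s ∧
            x = dotProduct v ((Z.transpose * Z).mulVec v)} with h | hne
      · rw [lamMaxS, h, Real.sSup_empty]; exact hb_nonneg
      · refine csSup_le hne ?_
        rintro x ⟨v, hv2, hv0, rfl⟩
        have hvsum : ∑ b, v b ^ 2 = 1 := by
          have := hv2
          rwa [l2, Real.sqrt_eq_one] at this
        set T : Finset (Fin g) := Finset.univ.filter (fun b => v b ≠ 0) with hT
        have hTcard : (T.card : ℝ) ≤ (s : ℝ) := by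
          have : T.card = l0 v := by
            rw [l0, Nat.card_eq_fintype_card, Fintype.card_subtype]
          exact_mod_cast this ▸ hv0
        rw [quad_eq]
        have hterm : ∀ a, (Z.mulVec v a) ^ 2 ≤ (s : ℝ) * μ ^ 2 := by
          intro a
          have hrw : Z.mulVec v a = ∑ b ∈ T, Z a b * v b := by
            rw [Matrix.mulVec, dotProduct]
            refine (Finset.sum_subset (Finset.subset_univ _) ?_).symm
            intro b _ hb
            simp only [hT, Finset.mem_filter, Finset.mem_univ, true_and, not_not] at hb
            simp [hb]
          rw [hrw]
          calc (∑ b ∈ T, Z a b * v b) ^ 2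
              ≤ (∑ b ∈ T, (Z a b) ^ 2) * (∑ b ∈ T, (v b) ^ 2) :=
                Finset.sum_mul_sq_le_sq_mul_sq T _ _
            _ ≤ ((T.card : ℝ) * μ ^ 2) * 1 := by
                refine mul_le_mul ?_ ?_ (Finset.sum_nonneg fun b _ => sq_nonneg _) (by positivity)
                · calc ∑ b ∈ T, (Z a b) ^ 2 ≤ ∑ _b ∈ T, μ ^ 2 := by
                        refine Finset.sum_le_sum fun b _ => ?_
                        have := hZb a b
                        nlinarith [abs_nonneg (Z a b), sq_abs (Z a b)]
                    _ = (T.card : ℝ) * μ ^ 2 := by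
                        rw [Finset.sum_const, nsmul_eq_mul]
                · calc ∑ b ∈ T, (v b) ^ 2 ≤ ∑ b, (v b) ^ 2 :=
                        Finset.sum_le_sum_of_subset_of_nonneg (Finset.subset_univ _)
                          (fun b _ _ => sq_nonneg _)
                    _ = 1 := hvsum
            _ ≤ (s : ℝ) * μ ^ 2 := by
                rw [mul_one]
                exact mul_le_mul_of_nonneg_right hTcard (sq_nonneg _)
        calc ∑ a, (Z.mulVec v a) ^ 2 ≤ ∑ _a : Fin g, (s : ℝ) * μ ^ 2 :=
              Finset.sum_le_sum fun a _ => hterm a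
          _ = (g : ℝ) * ((s : ℝ) * μ ^ 2) := by
              rw [Finset.sum_const, nsmul_eq_mul]; simp
    -- take square roots
    have hrho : rhoS s Z ≤ Real.sqrt ((g : ℝ) * ((s : ℝ) * μ ^ 2)) :=
      Real.sqrt_le_sqrt hlam
    have hsq : Real.sqrt ((g : ℝ) * ((s : ℝ) * μ ^ 2))
        = (g : ℝ) * (Real.sqrt ((s : ℝ) / g) * μ) := by
      rw [show (g : ℝ) * ((s : ℝ) * μ ^ 2) = ((s:ℝ)/g * ((g:ℝ) * μ)^2) by
        field_simp]
      rw [Real.sqrt_mul (by positivity), Real.sqrt_sq (by positivity)]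
      ring
    calc (1 / (g : ℝ)) * rhoS s Z ≤ (1 / (g : ℝ)) * ((g : ℝ) * (Real.sqrt ((s : ℝ) / g) * μ)) := by
          refine mul_le_mul_of_nonneg_left ?_ (by positivity)
          rw [← hsq]; exact hrho
      _ = Real.sqrt ((s : ℝ) / g) * μ := by field_simp
  -- conclude
  set Sm : Set ℝ := {x | ∃ G F : Fin q, G ≠ F ∧ x = (1 / (g : ℝ)) * rhoS s (gram D G F)} with hSm
  rcases Set.eq_empty_or_nonempty Sm with h | ⟨x, hx⟩
  · constructor
    · rw [muBs, ← hSm, h, Real.sSup_empty]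
    · rw [muBs, ← hSm, h, Real.sSup_empty]
      positivity
  · have hbdd : BddAbove Sm := by
      refine ⟨Real.sqrt ((s : ℝ) / g) * μ, ?_⟩
      rintro y ⟨G, F, hGF, rfl⟩
      exact key G F hGF
    constructor
    · obtain ⟨G, F, hGF, rfl⟩ := hx
      refine le_trans ?_ (le_csSup hbdd ⟨G, F, hGF, rfl⟩)
      have : 0 ≤ rhoS s (gram D G F) := Real.sqrt_nonneg _
      positivity
    · exact csSup_le ⟨x, hx⟩ (by rintro y ⟨G, F, hGF, rfl⟩; exact key G F hGF)
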